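/- Let m < n/2. For points p_1 < ... < p_n on a line, there exists a family of n - m intervals such that for every m-restricted bicoloring of P (one with at least m red and at least m blue points), some interval of the family is balanced. Specifically, the family of consecutive-pair intervals on the first n - m + 1 points works. -/

import Mathlib

/-- Let `m < n/2`.  For points `p 0 < … < p (n-1)` on a line there is a family
of `n - m` intervals (encoded as pairs of endpoints) such that for every
`m`-restricted bicoloring (at least `m` red and at least `m` blue points),
some interval of the family is balanced, i.e. contains equally many (and at
least one of each) red and blue points. -/
theorem stmt_7 (n m : ℕ) (hm : 1 ≤ m) (hmn : 2 * m < n)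
    (p : Fin n → ℝ) (hp : StrictMono p) :
    ∃ F : Finset (ℝ × ℝ), F.card = n - m ∧
      ∀ B : Fin n → Bool,
        m ≤ (Finset.univ.filter (fun l : Fin n => B l = true)).card →
        m ≤ (Finset.univ.filter (fun l : Fin n => B l = false)).card →
        ∃ I ∈ F,
          (Finset.univ.filter
            (fun l : Fin n => I.1 ≤ p l ∧ p l ≤ I.2 ∧ B l = true)).card =
          (Finset.univ.filter
            (fun l : Fin n => I.1 ≤ p l ∧ p l ≤ I.2 ∧ B l = false)).card ∧
          0 < (Finset.univ.filter
            (fun l : Fin n => I.1 ≤ p l ∧ p l ≤ I.2 ∧ B l = true)).card := by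
  have hn1 : 0 < n := by omega
  set f : ℕ → ℝ × ℝ := fun i =>
    (p ⟨min i (n-1), by omega⟩, p ⟨min (i+1) (n-1), by omega⟩) with hf
  refine ⟨(Finset.range (n - m)).image f, ?_, ?_⟩
  · rw [Finset.card_image_of_injOn, Finset.card_range]
    intro a ha b hb hab
    simp only [Finset.coe_range, Set.mem_Iio] at ha hb
    have h1 : min a (n-1) = a := by omega
    have h2 : min b (n-1) = b := by omega
    have := congrArg Prod.fst hab
    simp only [hf] at this
    have := hp.injective this
    simpa [h1, h2, Fin.ext_iff] using this
  · intro B hred hblue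
    -- find a color change among indices 0 .. n-m
    have hchange : ∃ i, ∃ h : i + 1 < n, i < n - m ∧
        B ⟨i, by omega⟩ ≠ B ⟨i+1, h⟩ := by
      by_contra hcon
      push_neg at hcon
      have hconst : ∀ j, ∀ h : j < n, j ≤ n - m → B ⟨j, h⟩ = B ⟨0, hn1⟩ := by
        intro j
        induction j with
        | zero => intro _ _; rfl
        | succ k ih =>
          intro h hle
          have hk : k < n := by omega
          have := hcon k h (by omega)
          rw [← this]
          exact ih hk (by omega)
      -- the minority color occupies indices > n - m only, at most m-1 of them
      set b := ! B ⟨0, hn1⟩ with hb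
      have hsub : ∀ l : Fin n, B l = b → n - m < l.val := by
        intro l hl
        by_contra hle
        push_neg at hle
        have := hconst l.val l.isLt hle
        rw [Fin.eta] at this
        rw [this] at hl
        simp [hb] at hl
      have hcard : (Finset.univ.filter (fun l : Fin n => B l = b)).card ≤
          (Finset.Ico (n - m + 1) n).card := by
        apply Finset.card_le_card_of_injOn (fun l => l.val)
        · intro l hl
          simp only [Finset.mem_coe, Finset.mem_filter] at hl
          exact Finset.mem_Ico.mpr ⟨by have := hsub l hl.2; beta_reduce; omega, l.isLt⟩
        · intro a _ c _ h
          exact Fin.val_injective h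
      rw [Nat.card_Ico] at hcard
      have : m ≤ (Finset.univ.filter (fun l : Fin n => B l = b)).card := by
        cases hB0 : B ⟨0, hn1⟩
        · simpa [hb, hB0] using hred
        · simpa [hb, hB0] using hblue
      omega
    obtain ⟨i, h1, hlt, hne⟩ := hchange
    set li : Fin n := ⟨i, by omega⟩ with hli
    set li1 : Fin n := ⟨i+1, h1⟩ with hli1
    have hmin1 : min i (n-1) = i := by omega
    have hmin2 : min (i+1) (n-1) = i+1 := by omega
    have hfi : f i = (p li, p li1) := by
      simp only [hf, hli, hli1]
      congr 1 <;> congr 1 <;> exact Fin.ext (by simp [hmin1, hmin2])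
    refine ⟨f i, Finset.mem_image_of_mem f (Finset.mem_range.mpr hlt), ?_⟩
    rw [hfi]
    have key : ∀ l : Fin n, (p li ≤ p l ∧ p l ≤ p li1) ↔ (l = li ∨ l = li1) := by
      intro l
      constructor
      · rintro ⟨ha, hb⟩
        rw [hp.le_iff_le] at ha hb
        have ha' : i ≤ l.val := by simpa [hli, Fin.le_def] using ha
        have hb' : l.val ≤ i + 1 := by simpa [hli1, Fin.le_def] using hb
        rcases Nat.eq_or_lt_of_le hb' with h | h
        · right; exact Fin.ext (by simpa [hli1] using h)
        · left; exact Fin.ext (by simp only [hli]; omega)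
      · rintro (rfl | rfl)
        · exact ⟨le_refl _, (hp.le_iff_le).mpr (by simp [hli, hli1, Fin.le_def])⟩
        · exact ⟨(hp.le_iff_le).mpr (by simp [hli, hli1, Fin.le_def]), le_refl _⟩
    have hne' : li ≠ li1 := by
      simp [hli, hli1, Fin.ext_iff]
    have setfilt : ∀ c : Bool,
        (Finset.univ.filter (fun l : Fin n => p li ≤ p l ∧ p l ≤ p li1 ∧ B l = c))
        = ({li, li1} : Finset (Fin n)).filter (fun l => B l = c) := by
      intro c
      ext l
      simp only [Finset.mem_filter, Finset.mem_univ, true_and, Finset.mem_insert,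
        Finset.mem_singleton]
      constructor
      · rintro ⟨ha, hb, hc⟩
        exact ⟨(key l).mp ⟨ha, hb⟩, hc⟩
      · rintro ⟨hor, hc⟩
        obtain ⟨ha, hb⟩ := (key l).mpr hor
        exact ⟨ha, hb, hc⟩
    rw [setfilt, setfilt]
    cases hBi : B li
    · have hBi1 : B li1 = true := by
        cases h : B li1
        · exact absurd (hBi.trans h.symm) hne
        · rfl
      have e1 : ({li, li1} : Finset (Fin n)).filter (fun l => B l = true) = {li1} := by
        ext l
        simp only [Finset.mem_filter, Finset.mem_insert, Finset.mem_singleton]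
        constructor
        · rintro ⟨rfl | rfl, h⟩
          · rw [hBi] at h; exact absurd h (by simp)
          · rfl
        · rintro rfl; exact ⟨Or.inr rfl, hBi1⟩
      have e2 : ({li, li1} : Finset (Fin n)).filter (fun l => B l = false) = {li} := by
        ext l
        simp only [Finset.mem_filter, Finset.mem_insert, Finset.mem_singleton]
        constructor
        · rintro ⟨rfl | rfl, h⟩
          · rfl
          · rw [hBi1] at h; exact absurd h (by simp)
        · rintro rfl; exact ⟨Or.inl rfl, hBi⟩
      rw [e1, e2]
      simp
    · have hBi1 : B li1 = false := by
        cases h : B li1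
        · rfl
        · exact absurd (hBi.trans h.symm) hne
      have e1 : ({li, li1} : Finset (Fin n)).filter (fun l => B l = true) = {li} := by
        ext l
        simp only [Finset.mem_filter, Finset.mem_insert, Finset.mem_singleton]
        constructor
        · rintro ⟨rfl | rfl, h⟩
          · rfl
          · rw [hBi1] at h; exact absurd h (by simp)
        · rintro rfl; exact ⟨Or.inl rfl, hBi⟩
      have e2 : ({li, li1} : Finset (Fin n)).filter (fun l => B l = false) = {li1} := by
        ext l
        simp only [Finset.mem_filter, Finset.mem_insert, Finset.mem_singleton]
        constructor
        · rintro ⟨rfl | rfl, h⟩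
          · rw [hBi] at h; exact absurd h (by simp)
          · rfl
        · rintro rfl; exact ⟨Or.inr rfl, hBi1⟩
      rw [e1, e2]
      simp
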